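/- Let λ > 0, κ ≥ 1, and define F(t) = 1 - e^{-(t/λ)^κ} and G(t) = (1/(λ Γ(1 + 1/κ))) ∫_0^t e^{-(x/λ)^κ} dx for t ≥ 0. Then G(t) ≥ F(t) for all t ≥ 0. -/

import Mathlib

open Real MeasureTheory Set

theorem weibull_cdf_le_residual_lifetime_cdf (lam κ : ℝ) (hlam : 0 < lam)
    (hκ : 1 ≤ κ) (t : ℝ) (ht : 0 ≤ t) :
    1 - Real.exp (-((t / lam) ^ κ))
      ≤ (1 / (lam * Real.Gamma (1 + 1 / κ))) * ∫ x in (0:ℝ)..t, Real.exp (-((x / lam) ^ κ)) := by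
  have hκ0 : 0 < κ := lt_of_lt_of_le one_pos hκ
  set f : ℝ → ℝ := fun x => Real.exp (-((x / lam) ^ κ)) with hf
  have hb : (0:ℝ) < lam ^ (-κ) := rpow_pos_of_pos hlam _
  have hfeq : ∀ x : ℝ, 0 ≤ x → f x = Real.exp (-(lam ^ (-κ)) * x ^ κ) := by
    intro x hx
    simp only [hf]
    congr 1
    rw [div_rpow hx hlam.le, rpow_neg hlam.le]
    ring
  -- integrability on Ioi 0
  have hint : IntegrableOn f (Ioi 0) := by
    have h := integrableOn_rpow_mul_exp_neg_mul_rpow (s := 0) neg_one_lt_zero hκ0 hb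
    refine h.congr_fun (fun x hx => ?_) measurableSet_Ioi
    beta_reduce
    rw [rpow_zero, one_mul, hfeq x (le_of_lt hx)]
  -- total integral value
  have hB : ∫ x in Ioi (0:ℝ), f x = lam * Real.Gamma (1 + 1 / κ) := by
    rw [setIntegral_congr_fun measurableSet_Ioi (fun x hx => hfeq x (le_of_lt hx)),
      integral_exp_neg_mul_rpow hκ0 hb]
    have h1 : ((lam : ℝ) ^ (-κ)) ^ (-1 / κ) = lam := by
      rw [← Real.rpow_mul hlam.le]
      have : -κ * (-1 / κ) = 1 := by field_simp
      rw [this, rpow_one]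
    rw [h1, add_comm]
  set c : ℝ := Real.exp (-((t / lam) ^ κ)) with hc
  have hc0 : 0 < c := Real.exp_pos _
  -- superadditivity
  have hsuper : ∀ x : ℝ, 0 ≤ x → (t / lam) ^ κ + (x / lam) ^ κ ≤ ((x + t) / lam) ^ κ := by
    intro x hx
    have ht' : (0:ℝ) ≤ t / lam := div_nonneg ht hlam.le
    have hx' : (0:ℝ) ≤ x / lam := div_nonneg hx hlam.le
    have := NNReal.add_rpow_le_rpow_add ⟨t / lam, ht'⟩ ⟨x / lam, hx'⟩ hκ
    have h2 : ((t / lam : ℝ)) ^ κ + ((x / lam : ℝ)) ^ κ ≤ ((t / lam + x / lam : ℝ)) ^ κ := by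
      exact_mod_cast this
    calc (t / lam) ^ κ + (x / lam) ^ κ ≤ (t / lam + x / lam) ^ κ := h2
      _ = ((x + t) / lam) ^ κ := by rw [add_div]; ring_nf
  -- shift identity
  have hemb : MeasurableEmbedding (fun x : ℝ => x + t) :=
    (MeasurableEquiv.addRight t).measurableEmbedding
  have hmp : MeasurePreserving (fun x : ℝ => x + t) volume volume :=
    measurePreserving_add_right volume t
  have hpre : (fun x : ℝ => x + t) ⁻¹' Ioi t = Ioi 0 := by
    ext x; simp
  have hshift : ∫ x in Ioi t, f x = ∫ x in Ioi (0:ℝ), f (x + t) := by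
    have := hmp.setIntegral_preimage_emb hemb f (Ioi t)
    rw [← this, hpre]
  have hintt : IntegrableOn f (Ioi t) := hint.mono_set (Ioi_subset_Ioi ht)
  have hintshift : IntegrableOn (fun x => f (x + t)) (Ioi (0:ℝ)) := by
    have := (hmp.integrableOn_comp_preimage hemb (f := f) (s := Ioi t)).mpr hintt
    rwa [hpre] at this
  -- tail bound
  have hT : ∫ x in Ioi t, f x ≤ c * (lam * Real.Gamma (1 + 1 / κ)) := by
    rw [hshift, ← hB]
    calc ∫ x in Ioi (0:ℝ), f (x + t)
        ≤ ∫ x in Ioi (0:ℝ), c * f x := by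
          refine setIntegral_mono_on hintshift (hint.const_mul c) measurableSet_Ioi ?_
          intro x hx
          simp only [hf, hc]
          rw [← Real.exp_add]
          apply Real.exp_le_exp.mpr
          have := hsuper x (le_of_lt hx)
          linarith
      _ = c * ∫ x in Ioi (0:ℝ), f x := integral_const_mul c _
  -- split
  have hsplit : ∫ x in Ioi (0:ℝ), f x = (∫ x in (0:ℝ)..t, f x) + ∫ x in Ioi t, f x := by
    rw [intervalIntegral.integral_of_le ht, ← Ioc_union_Ioi_eq_Ioi ht,
      setIntegral_union (Ioc_disjoint_Ioi le_rfl) measurableSet_Ioi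
        (hint.mono_set Ioc_subset_Ioi_self) hintt]
  have hBpos : (0:ℝ) < lam * Real.Gamma (1 + 1 / κ) :=
    mul_pos hlam (Real.Gamma_pos_of_pos (by positivity))
  rw [one_div_mul_eq_div, le_div_iff₀ hBpos]
  nlinarith [hT, hsplit, hB]
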